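/- Intersection lower bound witness: let m, n ≥ 2 and, over the alphabet {a,b,c}, let L₁ = { c·w : w ∈ {a,b}*, the number of a's in w is ≡ 0 (mod m−1) } and L₂ = { c·w : w ∈ {a,b}*, the number of b's in w is ≡ 0 (mod n−1) }. Then L₁ and L₂ are suffix-free, NSC(L₁) = m, NSC(L₂) = n, and NSC(L₁ ∩ L₂) = mn − (m + n) + 2. -/

import Mathlib

open Computability

/-- A nondeterministic finite automaton with a single start state and
no ε-transitions. -/
structure SNFA (α : Type) (σ : Type) where
  step : σ → α → Set σ
  start : σ
  accept : Set σ

namespace SNFA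

variable {α σ : Type}

/-- The set of states reachable from some state in `S` by one transition on `a`. -/
def stepSet (M : SNFA α σ) (S : Set σ) (a : α) : Set σ :=
  ⋃ s ∈ S, M.step s a

/-- The set of states reachable from the set `S` of states by reading the word `w`. -/
def evalFrom (M : SNFA α σ) (S : Set σ) (w : List α) : Set σ :=
  w.foldl M.stepSet S

/-- The language accepted by `M`: all words spelled out by a path
from the start state to an accepting state. -/
def accepts (M : SNFA α σ) : Language α :=
  {w | ∃ q ∈ M.accept, q ∈ M.evalFrom {M.start} w}

end SNFA

/-- A language is suffix-free if no word of the language is a proper suffix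
of another word of the language. -/
def SuffixFree {α : Type} (L : Language α) : Prop :=
  ∀ u v : List α, u ∈ L → v ∈ L → u <:+ v → u = v

/-- `NSCle L k`: there is an NFA with at most `k` states accepting `L`
(so the nondeterministic state complexity of `L` is at most `k`). -/
def NSCle {α : Type} (L : Language α) (k : ℕ) : Prop :=
  ∃ (σ : Type) (x : Fintype σ) (M : SNFA α σ), M.accepts = L ∧ @Fintype.card σ x ≤ k

/-- `NSCge L k`: every NFA accepting `L` has at least `k` states
(so the nondeterministic state complexity of `L` is at least `k`). -/
def NSCge {α : Type} (L : Language α) (k : ℕ) : Prop :=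
  ∀ (σ : Type) [Fintype σ] (M : SNFA α σ), M.accepts = L → k ≤ Fintype.card σ

/-- `NSCeq L m`: the nondeterministic state complexity of `L` is exactly `m`:
some NFA with `m` states accepts `L` and every NFA accepting `L` has at least
`m` states. -/
def NSCeq {α : Type} (L : Language α) (m : ℕ) : Prop :=
  NSCle L m ∧ NSCge L m

/-- The language `{ c·w : w ∈ {a,b}*, |w|_a ≡ 0 (mod m-1) }` over the
alphabet `{a, b, c}` (encoded as `a = 0`, `b = 1`, `c = 2` in `Fin 3`). -/
def interLangA (m : ℕ) : Language (Fin 3) :=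
  {w | ∃ v : List (Fin 3), w = 2 :: v ∧ (∀ x ∈ v, x = 0 ∨ x = 1) ∧
        v.count 0 % (m - 1) = 0}

/-- The language `{ c·w : w ∈ {a,b}*, |w|_b ≡ 0 (mod n-1) }` over the
alphabet `{a, b, c}` (encoded as `a = 0`, `b = 1`, `c = 2` in `Fin 3`). -/
def interLangB (n : ℕ) : Language (Fin 3) :=
  {w | ∃ v : List (Fin 3), w = 2 :: v ∧ (∀ x ∈ v, x = 0 ∨ x = 1) ∧
        v.count 1 % (n - 1) = 0}

namespace SNFA
variable {α σ : Type}

lemma evalFrom_nil (M : SNFA α σ) (S : Set σ) : M.evalFrom S [] = S := rfl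

lemma evalFrom_cons (M : SNFA α σ) (S : Set σ) (a : α) (w : List α) :
    M.evalFrom S (a :: w) = M.evalFrom (M.stepSet S a) w := rfl

lemma evalFrom_append (M : SNFA α σ) (S : Set σ) (u v : List α) :
    M.evalFrom S (u ++ v) = M.evalFrom (M.evalFrom S u) v :=
  List.foldl_append

lemma stepSet_singleton (M : SNFA α σ) (s : σ) (a : α) :
    M.stepSet {s} a = M.step s a := by simp [stepSet]

lemma stepSet_empty (M : SNFA α σ) (a : α) : M.stepSet ∅ a = ∅ := by simp [stepSet]

lemma evalFrom_empty (M : SNFA α σ) (w : List α) : M.evalFrom ∅ w = ∅ := by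
  induction w with
  | nil => rfl
  | cons a w ih => rw [evalFrom_cons, stepSet_empty, ih]

lemma mem_evalFrom_iff (M : SNFA α σ) (w : List α) (S : Set σ) (q : σ) :
    q ∈ M.evalFrom S w ↔ ∃ s ∈ S, q ∈ M.evalFrom {s} w := by
  induction w generalizing S with
  | nil => simp [evalFrom_nil]
  | cons a w ih =>
    rw [evalFrom_cons, ih]
    constructor
    · rintro ⟨t, ht, hq⟩
      simp only [stepSet, Set.mem_iUnion] at ht
      obtain ⟨s, hs, hts⟩ := ht
      exact ⟨s, hs, by rw [evalFrom_cons, stepSet_singleton, ih]; exact ⟨t, hts, hq⟩⟩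
    · rintro ⟨s, hs, hq⟩
      rw [evalFrom_cons, stepSet_singleton, ih] at hq
      obtain ⟨t, ht, hq⟩ := hq
      exact ⟨t, by simp only [stepSet, Set.mem_iUnion]; exact ⟨s, hs, ht⟩, hq⟩

end SNFA

/-- Fooling set lower bound. -/
lemma fooling {α σ ι : Type} [Fintype σ] [Fintype ι] (M : SNFA α σ)
    (x y : ι → List α)
    (h1 : ∀ i, x i ++ y i ∈ M.accepts)
    (h2 : ∀ i j, x i ++ y j ∈ M.accepts → x j ++ y i ∈ M.accepts → i = j) :
    Fintype.card ι ≤ Fintype.card σ := by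
  have key : ∀ i, ∃ s, s ∈ M.evalFrom {M.start} (x i) ∧
      ∃ q ∈ M.accept, q ∈ M.evalFrom {s} (y i) := by
    intro i
    obtain ⟨q, hqa, hq⟩ := h1 i
    rw [SNFA.evalFrom_append, SNFA.mem_evalFrom_iff] at hq
    obtain ⟨s, hs, hq⟩ := hq
    exact ⟨s, hs, q, hqa, hq⟩
  choose f hf1 hf2 using key
  have hinj : Function.Injective f := by
    intro i j hij
    apply h2
    · obtain ⟨q, hqa, hq⟩ := hf2 j
      exact ⟨q, hqa, by
        rw [SNFA.evalFrom_append, SNFA.mem_evalFrom_iff]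
        exact ⟨f j, hij ▸ hf1 i, hq⟩⟩
    · obtain ⟨q, hqa, hq⟩ := hf2 i
      exact ⟨q, hqa, by
        rw [SNFA.evalFrom_append, SNFA.mem_evalFrom_iff]
        exact ⟨f i, hij ▸ hf1 j, hq⟩⟩
  exact Fintype.card_le_of_injective f hinj


/-- Machine counting a's mod p and b's mod q. -/
def MAB (p q : ℕ) (hp : 0 < p) (hq : 0 < q) : SNFA (Fin 3) (Option (Fin p × Fin q)) where
  step s a :=
    match s with
    | none => if a = 2 then {some (⟨0, hp⟩, ⟨0, hq⟩)} else ∅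
    | some (j, k) =>
      if a = 0 then {some (⟨(j.1 + 1) % p, Nat.mod_lt _ hp⟩, k)}
      else if a = 1 then {some (j, ⟨(k.1 + 1) % q, Nat.mod_lt _ hq⟩)}
      else ∅
  start := none
  accept := {some (⟨0, hp⟩, ⟨0, hq⟩)}

lemma fin3_cases (a : Fin 3) : a = 0 ∨ a = 1 ∨ a = 2 := by omega

lemma modh (a c n : ℕ) (h : 0 < n) : ((a + 1) % n + c) % n = (a + (c + 1)) % n := by
  rw [Nat.mod_add_mod]; congr 1; omega

lemma step0 (p q : ℕ) (hp : 0 < p) (hq : 0 < q) (j : Fin p) (k : Fin q) :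
    (MAB p q hp hq).step (some (j, k)) 0 = {some (⟨(j.1 + 1) % p, Nat.mod_lt _ hp⟩, k)} := by
  simp [MAB]

lemma step1 (p q : ℕ) (hp : 0 < p) (hq : 0 < q) (j : Fin p) (k : Fin q) :
    (MAB p q hp hq).step (some (j, k)) 1 = {some (j, ⟨(k.1 + 1) % q, Nat.mod_lt _ hq⟩)} := by
  simp [MAB]

lemma step2 (p q : ℕ) (hp : 0 < p) (hq : 0 < q) (j : Fin p) (k : Fin q) :
    (MAB p q hp hq).step (some (j, k)) 2 = ∅ := by
  simp [MAB]

lemma stepn (p q : ℕ) (hp : 0 < p) (hq : 0 < q) (a : Fin 3) :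
    (MAB p q hp hq).step none a = if a = 2 then {some (⟨0, hp⟩, ⟨0, hq⟩)} else ∅ := rfl

lemma evalAB_mem (p q : ℕ) (hp : 0 < p) (hq : 0 < q) (v : List (Fin 3)) :
    ∀ (j : Fin p) (k : Fin q) (s : Option (Fin p × Fin q)),
    s ∈ (MAB p q hp hq).evalFrom {some (j, k)} v ↔
      (∀ x ∈ v, x = 0 ∨ x = 1) ∧
      s = some (⟨(j.1 + v.count 0) % p, Nat.mod_lt _ hp⟩,
                ⟨(k.1 + v.count 1) % q, Nat.mod_lt _ hq⟩) := by
  induction v with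
  | nil =>
    intro j k s
    have hj : (⟨j.1 % p, Nat.mod_lt _ hp⟩ : Fin p) = j := Fin.ext (Nat.mod_eq_of_lt j.2)
    have hk : (⟨k.1 % q, Nat.mod_lt _ hq⟩ : Fin q) = k := Fin.ext (Nat.mod_eq_of_lt k.2)
    simp only [SNFA.evalFrom_nil, List.not_mem_nil, List.count_nil, Nat.add_zero,
      Set.mem_singleton_iff, false_implies, implies_true, true_and, hj, hk]
  | cons a v ih =>
    intro j k s
    rw [SNFA.evalFrom_cons, SNFA.stepSet_singleton]
    rcases fin3_cases a with rfl | rfl | rfl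
    · rw [step0, ih]
      have e1 : ((j.1 + 1) % p + v.count 0) % p = (j.1 + (0 :: v).count 0) % p := by
        rw [List.count_cons_self, modh _ _ _ hp]
      have e2 : (k.1 + v.count 1) % q = (k.1 + (0 :: v).count 1) % q := by
        rw [List.count_cons_of_ne (by decide)]
      constructor
      · rintro ⟨halph, rfl⟩
        exact ⟨fun x hx => by
            rcases List.mem_cons.mp hx with rfl | hx
            · decide
            · exact halph x hx,
          by congr 2 <;> exact Fin.ext (by simp [e1, e2])⟩
      · rintro ⟨halph, rfl⟩
        exact ⟨fun x hx => halph x (by simp [hx]),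
          by congr 2 <;> exact Fin.ext (by simp [e1, e2])⟩
    · rw [step1, ih]
      have e1 : (j.1 + v.count 0) % p = (j.1 + (1 :: v).count 0) % p := by
        rw [List.count_cons_of_ne (by decide)]
      have e2 : ((k.1 + 1) % q + v.count 1) % q = (k.1 + (1 :: v).count 1) % q := by
        rw [List.count_cons_self, modh _ _ _ hq]
      constructor
      · rintro ⟨halph, rfl⟩
        exact ⟨fun x hx => by
            rcases List.mem_cons.mp hx with rfl | hx
            · decide
            · exact halph x hx,
          by congr 2 <;> exact Fin.ext (by simp [e1, e2])⟩
      · rintro ⟨halph, rfl⟩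
        exact ⟨fun x hx => halph x (by simp [hx]),
          by congr 2 <;> exact Fin.ext (by simp [e1, e2])⟩
    · rw [step2, SNFA.evalFrom_empty]
      simp only [Set.mem_empty_iff_false, false_iff]
      rintro ⟨halph, -⟩
      rcases halph 2 (by simp) with h | h <;> exact absurd h (by decide)

lemma acceptsAB (p q : ℕ) (hp : 0 < p) (hq : 0 < q) :
    (MAB p q hp hq).accepts = interLangA (p + 1) ⊓ interLangB (q + 1) := by
  have hstart : (MAB p q hp hq).start = none := rfl
  have hacc : (MAB p q hp hq).accept = {some (⟨0, hp⟩, ⟨0, hq⟩)} := rfl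
  ext w
  constructor
  · rintro ⟨s, hsa, hs⟩
    rw [hstart] at hs
    rw [hacc, Set.mem_singleton_iff] at hsa
    subst hsa
    rcases w with _ | ⟨a, v⟩
    · rw [SNFA.evalFrom_nil, Set.mem_singleton_iff] at hs
      exact absurd hs (by simp)
    · rw [SNFA.evalFrom_cons, SNFA.stepSet_singleton, stepn] at hs
      rcases fin3_cases a with rfl | rfl | rfl
      · rw [if_neg (by decide), SNFA.evalFrom_empty] at hs
        exact absurd hs (by simp)
      · rw [if_neg (by decide), SNFA.evalFrom_empty] at hs
        exact absurd hs (by simp)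
      · rw [if_pos rfl, evalAB_mem] at hs
        obtain ⟨halph, hs⟩ := hs
        have h1 : (0 + v.count 0) % p = 0 := by
          have := congrArg (fun o => (o.getD (⟨0,hp⟩,⟨0,hq⟩)).1.1) hs
          simpa using this.symm
        have h2 : (0 + v.count 1) % q = 0 := by
          have := congrArg (fun o => (o.getD (⟨0,hp⟩,⟨0,hq⟩)).2.1) hs
          simpa using this.symm
        exact ⟨⟨v, rfl, halph, by simpa using h1⟩, ⟨v, rfl, halph, by simpa using h2⟩⟩
  · rintro ⟨⟨v, rfl, halph, hca⟩, ⟨v', hv', -, hcb⟩⟩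
    obtain rfl : v' = v := by injection hv'.symm
    refine ⟨some (⟨0, hp⟩, ⟨0, hq⟩), by rw [hacc]; rfl, ?_⟩
    rw [hstart, SNFA.evalFrom_cons, SNFA.stepSet_singleton, stepn, if_pos rfl, evalAB_mem]
    refine ⟨halph, ?_⟩
    congr 2 <;> exact Fin.ext (by simp_all)

-- continuation: fooling words, lower bound, upper bound, suffix-free, main theorem

lemma mod_cancel {p a b : ℕ} (ha : a < p) (hb : b < p) (h : (a + (p - b)) % p = 0) :
    a = b := by
  have hd := Nat.dvd_of_mod_eq_zero h
  have h1 : 0 < a + (p - b) := by omega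
  have h2 : a + (p - b) < 2 * p := by omega
  have := Nat.eq_of_dvd_of_lt_two_mul (by omega) hd h2
  omega

def xw (p q : ℕ) : Option (Fin p × Fin q) → List (Fin 3)
  | none => []
  | some (i, j) => 2 :: (List.replicate i.1 0 ++ List.replicate j.1 1)

def yw (p q : ℕ) : Option (Fin p × Fin q) → List (Fin 3)
  | none => 2 :: (List.replicate p 0 ++ List.replicate q 1)
  | some (i, j) => List.replicate (p - i.1) 0 ++ List.replicate (q - j.1) 1

lemma mem_inter (p q : ℕ) (v : List (Fin 3)) :
    (2 :: v) ∈ interLangA (p + 1) ⊓ interLangB (q + 1) ↔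
      (∀ x ∈ v, x = 0 ∨ x = 1) ∧ v.count 0 % p = 0 ∧ v.count 1 % q = 0 := by
  constructor
  · rintro ⟨⟨v1, h1, ha1, hc1⟩, ⟨v2, h2, -, hc2⟩⟩
    have e1 : v1 = v := by injection h1.symm
    have e2 : v2 = v := by injection h2.symm
    subst e1; subst e2
    exact ⟨ha1, by simpa using hc1, by simpa using hc2⟩
  · rintro ⟨ha, h0, h1⟩
    exact ⟨⟨v, rfl, ha, by simpa using h0⟩, ⟨v, rfl, ha, by simpa using h1⟩⟩

lemma not_mem_head (p q : ℕ) (w : List (Fin 3)) (hw : w.head? ≠ some 2) :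
    w ∉ interLangA (p + 1) ⊓ interLangB (q + 1) := by
  rintro ⟨⟨v, rfl, -, -⟩, -⟩
  exact hw rfl

lemma alph_rep (a b : ℕ) : ∀ x ∈ List.replicate a (0 : Fin 3) ++ List.replicate b 1,
    x = 0 ∨ x = 1 := by
  intro x hx
  rcases List.mem_append.mp hx with h | h
  · exact Or.inl (List.eq_of_mem_replicate h)
  · exact Or.inr (List.eq_of_mem_replicate h)

lemma count_rep0 (a b : ℕ) :
    (List.replicate a (0 : Fin 3) ++ List.replicate b 1).count 0 = a := by
  simp [List.count_replicate]

lemma count_rep1 (a b : ℕ) :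
    (List.replicate a (0 : Fin 3) ++ List.replicate b 1).count 1 = b := by
  simp [List.count_replicate]

lemma lbAB (p q : ℕ) (hp : 0 < p) (hq : 0 < q) :
    NSCge (interLangA (p + 1) ⊓ interLangB (q + 1)) (p * q + 1) := by
  intro σ _ M hM
  have hcard : Fintype.card (Option (Fin p × Fin q)) = p * q + 1 := by simp
  rw [← hcard]
  apply fooling M (xw p q) (yw p q)
  · rintro (_ | ⟨i, j⟩)
    · rw [hM]
      simp only [xw, yw, List.nil_append]
      rw [mem_inter]
      exact ⟨alph_rep p q, by rw [count_rep0]; exact Nat.mod_self p,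
        by rw [count_rep1]; exact Nat.mod_self q⟩
    · rw [hM]
      simp only [xw, yw, List.cons_append]
      rw [mem_inter]
      refine ⟨?_, ?_, ?_⟩
      · intro x hx
        rcases List.mem_append.mp hx with h | h
        · exact alph_rep _ _ x h
        · exact alph_rep _ _ x h
      · rw [List.count_append, count_rep0, count_rep0]
        rw [show i.1 + (p - i.1) = p by omega]
        exact Nat.mod_self p
      · rw [List.count_append, count_rep1, count_rep1]
        rw [show j.1 + (q - j.1) = q by omega]
        exact Nat.mod_self q
  · rintro (_ | ⟨i1, j1⟩) (_ | ⟨i2, j2⟩) hij hji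
    · rfl
    · exfalso
      rw [hM] at hij
      simp only [xw, yw, List.nil_append] at hij
      refine not_mem_head p q _ ?_ hij
      rw [show p - i2.1 = (p - i2.1 - 1) + 1 by omega, List.replicate_succ,
        List.cons_append]
      simp
    · exfalso
      rw [hM] at hij
      simp only [xw, yw, List.cons_append] at hij
      rw [mem_inter] at hij
      rcases hij.1 2 (by simp) with h | h <;> exact absurd h (by decide)
    · rw [hM] at hij
      simp only [xw, yw, List.cons_append] at hij
      rw [mem_inter] at hij
      obtain ⟨-, hc0, hc1⟩ := hij
      rw [List.count_append, count_rep0, count_rep0] at hc0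
      rw [List.count_append, count_rep1, count_rep1] at hc1
      have e1 : i1.1 = i2.1 := mod_cancel i1.2 i2.2 hc0
      have e2 : j1.1 = j2.1 := mod_cancel j1.2 j2.2 hc1
      congr 1
      exact Prod.ext (Fin.ext e1) (Fin.ext e2)

lemma ubAB (p q : ℕ) (hp : 0 < p) (hq : 0 < q) :
    NSCle (interLangA (p + 1) ⊓ interLangB (q + 1)) (p * q + 1) :=
  ⟨Option (Fin p × Fin q), inferInstance, MAB p q hp hq, acceptsAB p q hp hq, by simp⟩

lemma A_eq (p : ℕ) : interLangA (p + 1) ⊓ interLangB (1 + 1) = interLangA (p + 1) := by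
  ext w
  constructor
  · exact fun h => h.1
  · rintro ⟨v, rfl, ha, hc⟩
    exact ⟨⟨v, rfl, ha, hc⟩, ⟨v, rfl, ha, by simp [Nat.mod_one]⟩⟩

lemma B_eq (q : ℕ) : interLangA (1 + 1) ⊓ interLangB (q + 1) = interLangB (q + 1) := by
  ext w
  constructor
  · exact fun h => h.2
  · rintro ⟨v, rfl, ha, hc⟩
    exact ⟨⟨v, rfl, ha, by simp [Nat.mod_one]⟩, ⟨v, rfl, ha, hc⟩⟩

lemma sf_aux (L : Language (Fin 3))
    (h : ∀ w ∈ L, ∃ v, w = 2 :: v ∧ (∀ x ∈ v, x = 0 ∨ x = 1)) : SuffixFree L := by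
  rintro u v hu hv ⟨t, ht⟩
  obtain ⟨u', rfl, -⟩ := h u hu
  obtain ⟨v', hv', hav⟩ := h v hv
  rcases t with _ | ⟨c, t⟩
  · simpa using ht
  · exfalso
    rw [List.cons_append, hv'] at ht
    injection ht with h1 h2
    have h2' : (2 : Fin 3) ∈ v' := by rw [← h2]; simp
    rcases hav 2 h2' with h | h <;> exact absurd h (by decide)


/-- **Intersection, lower bound witness.** For `m, n ≥ 2`, the languages
`L₁ = { cw : |w|_a ≡ 0 (mod m-1) }` and `L₂ = { cw : |w|_b ≡ 0 (mod n-1) }`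
over `{a, b, c}` are suffix-free, `NSC(L₁) = m`, `NSC(L₂) = n`, and
`NSC(L₁ ∩ L₂) = m * n - (m + n) + 2`. -/
theorem intersection_lower_witness (m n : ℕ) (hm : 2 ≤ m) (hn : 2 ≤ n) :
    SuffixFree (interLangA m) ∧ SuffixFree (interLangB n) ∧
    NSCeq (interLangA m) m ∧ NSCeq (interLangB n) n ∧
    NSCeq (interLangA m ⊓ interLangB n) (m * n - (m + n) + 2) := by
  obtain ⟨p, rfl⟩ : ∃ p, m = p + 1 := ⟨m - 1, by omega⟩
  obtain ⟨q, rfl⟩ : ∃ q, n = q + 1 := ⟨n - 1, by omega⟩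
  have hp : 0 < p := by omega
  have hq : 0 < q := by omega
  have harith : (p + 1) * (q + 1) - ((p + 1) + (q + 1)) + 2 = p * q + 1 := by
    have h : (p + 1) * (q + 1) = p * q + p + q + 1 := by ring
    rw [h]
    have h2 : ∀ r : ℕ, 1 ≤ r → r + p + q + 1 - (p + 1 + (q + 1)) + 2 = r + 1 :=
      fun r hr => by omega
    exact h2 (p * q) (Nat.one_le_iff_ne_zero.mpr (Nat.mul_pos hp hq).ne')
  refine ⟨sf_aux _ ?_, sf_aux _ ?_, ⟨?_, ?_⟩, ⟨?_, ?_⟩, ?_⟩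
  · rintro w ⟨v, rfl, ha, -⟩; exact ⟨v, rfl, ha⟩
  · rintro w ⟨v, rfl, ha, -⟩; exact ⟨v, rfl, ha⟩
  · have := ubAB p 1 hp one_pos
    rw [A_eq] at this
    simpa using this
  · have := lbAB p 1 hp one_pos
    rw [A_eq] at this
    simpa using this
  · have := ubAB 1 q one_pos hq
    rw [B_eq] at this
    simpa using this
  · have := lbAB 1 q one_pos hq
    rw [B_eq] at this
    simpa using this
  · rw [harith]
    exact ⟨ubAB p q hp hq, lbAB p q hp hq⟩
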